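/- Let S be a Sauer Matrix of size 4 of type (0,4), i.e., every nonzero entry of S equals −1. If r ∈ [0,1)^4 is such that r+S is totally 1-submodular, then r = (1/2, 1/2, 1/2, 1/2)ᵀ. -/

import Mathlib

open Matrix

/-- Every `k×k` minor of `A` is at most `c` in absolute value. -/
def MinorsLE {m n : ℕ} (k : ℕ) (A : Matrix (Fin m) (Fin n) ℝ) (c : ℝ) : Prop :=
  ∀ (f : Fin k ↪ Fin m) (g : Fin k ↪ Fin n), |(A.submatrix f g).det| ≤ c

/-- `A` is totally 1-submodular: all its minors, of any size, are at most `1`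
in absolute value. -/
def Totally1Submodular {m n : ℕ} (A : Matrix (Fin m) (Fin n) ℝ) : Prop :=
  ∀ k : ℕ, MinorsLE k A 1

/-- The shifted matrix `t + A`, whose columns are `t + A_j`. -/
def shiftMat {m n : ℕ} (t : Fin m → ℝ) (A : Matrix (Fin m) (Fin n) ℝ) :
    Matrix (Fin m) (Fin n) ℝ :=
  Matrix.of fun i j => t i + A i j

/-- All entries of `A` lie in `{-1, 0, 1}`. -/
def SignEntries {m n : ℕ} (A : Matrix (Fin m) (Fin n) ℝ) : Prop :=
  ∀ i j, A i j = -1 ∨ A i j = 0 ∨ A i j = 1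

/-- The data admissible for the shifted Heller constant `h_s(m)`: a translation vector
`t ∈ [0,1)^m \ {0}` and a matrix `A ∈ {-1,0,1}^{m×n}` with pairwise distinct columns
such that `t + A` is totally 1-submodular. -/
def ShiftedAdmissible (m n : ℕ) (t : Fin m → ℝ) (A : Matrix (Fin m) (Fin n) ℝ) : Prop :=
  (∀ i, 0 ≤ t i ∧ t i < 1) ∧ t ≠ 0 ∧ SignEntries A ∧
    Function.Injective A.transpose ∧ Totally1Submodular (shiftMat t A)

/-- A Sauer Matrix of size `k`: a `{-1,0,1}`-matrix of format `k × 2^k` having, for each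
subset `E ⊆ {1,…,k}`, exactly one column whose support equals `E`. -/
def IsSauer {k : ℕ} (S : Matrix (Fin k) (Fin (2 ^ k)) ℝ) : Prop :=
  SignEntries S ∧ ∀ E : Set (Fin k), ∃! j : Fin (2 ^ k), ∀ i, S i j ≠ 0 ↔ i ∈ E

private theorem detFour (M : Matrix (Fin 4) (Fin 4) ℝ) :
  M.det =
    M 0 0 * (M 1 1*(M 2 2*M 3 3 - M 2 3*M 3 2) - M 1 2*(M 2 1*M 3 3 - M 2 3*M 3 1) + M 1 3*(M 2 1*M 3 2 - M 2 2*M 3 1))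
  - M 0 1 * (M 1 0*(M 2 2*M 3 3 - M 2 3*M 3 2) - M 1 2*(M 2 0*M 3 3 - M 2 3*M 3 0) + M 1 3*(M 2 0*M 3 2 - M 2 2*M 3 0))
  + M 0 2 * (M 1 0*(M 2 1*M 3 3 - M 2 3*M 3 1) - M 1 1*(M 2 0*M 3 3 - M 2 3*M 3 0) + M 1 3*(M 2 0*M 3 1 - M 2 1*M 3 0))
  - M 0 3 * (M 1 0*(M 2 1*M 3 2 - M 2 2*M 3 1) - M 1 1*(M 2 0*M 3 2 - M 2 2*M 3 0) + M 1 2*(M 2 0*M 3 1 - M 2 1*M 3 0)) := by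
  rw [Matrix.det_succ_row_zero]
  simp [Fin.sum_univ_succ, Matrix.det_fin_three, Matrix.submatrix_apply, Fin.succAbove]
  ring

theorem stmt13 (S : Matrix (Fin 4) (Fin (2 ^ 4)) ℝ) (hS : IsSauer S)
    (htype : ∀ i j, S i j ≠ 1)
    (r : Fin 4 → ℝ) (hr : ∀ i, 0 ≤ r i ∧ r i < 1)
    (hsub : Totally1Submodular (shiftMat r S)) :
    r = ![1/2, 1/2, 1/2, 1/2] := by
  obtain ⟨hsign, hcol⟩ := hS
  -- entry value lemmas
  have val1 : ∀ {j : Fin (2 ^ 4)} {E : Set (Fin 4)}, (∀ i, S i j ≠ 0 ↔ i ∈ E) →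
      ∀ i, i ∈ E → S i j = -1 := by
    intro j E hj i hi
    have hne : S i j ≠ 0 := (hj i).mpr hi
    rcases hsign i j with h | h | h
    · exact h
    · exact absurd h hne
    · exact absurd h (htype i j)
  have val0 : ∀ {j : Fin (2 ^ 4)} {E : Set (Fin 4)}, (∀ i, S i j ≠ 0 ↔ i ∈ E) →
      ∀ i, i ∉ E → S i j = 0 := by
    intro j E hj i hi
    by_contra h
    exact hi ((hj i).mp h)
  have ne_of : ∀ {j j' : Fin (2 ^ 4)} {E F : Set (Fin 4)}, (∀ i, S i j ≠ 0 ↔ i ∈ E) →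
      (∀ i, S i j' ≠ 0 ↔ i ∈ F) → ∀ i, i ∈ E → i ∉ F → j ≠ j' := by
    intro j j' E F hj hj' i hiE hiF h
    subst h
    exact hiF ((hj' i).mp ((hj i).mpr hiE))
  -- the eight columns
  obtain ⟨a0, ha0, -⟩ := hcol {0}
  obtain ⟨a1, ha1, -⟩ := hcol {1}
  obtain ⟨a2, ha2, -⟩ := hcol {2}
  obtain ⟨a3, ha3, -⟩ := hcol {3}
  obtain ⟨b0, hb0, -⟩ := hcol {1, 2, 3}
  obtain ⟨b1, hb1, -⟩ := hcol {0, 2, 3}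
  obtain ⟨b2, hb2, -⟩ := hcol {0, 1, 3}
  obtain ⟨b3, hb3, -⟩ := hcol {0, 1, 2}
  -- entry facts
  have ea0_0 : S 0 a0 = -1 := val1 ha0 0 (by simp)
  have ea0_1 : S 1 a0 = 0 := val0 ha0 1 (by simp)
  have ea0_2 : S 2 a0 = 0 := val0 ha0 2 (by simp)
  have ea0_3 : S 3 a0 = 0 := val0 ha0 3 (by simp)
  have ea1_0 : S 0 a1 = 0 := val0 ha1 0 (by simp)
  have ea1_1 : S 1 a1 = -1 := val1 ha1 1 (by simp)
  have ea1_2 : S 2 a1 = 0 := val0 ha1 2 (by simp)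
  have ea1_3 : S 3 a1 = 0 := val0 ha1 3 (by simp)
  have ea2_0 : S 0 a2 = 0 := val0 ha2 0 (by simp)
  have ea2_1 : S 1 a2 = 0 := val0 ha2 1 (by simp)
  have ea2_2 : S 2 a2 = -1 := val1 ha2 2 (by simp)
  have ea2_3 : S 3 a2 = 0 := val0 ha2 3 (by simp)
  have ea3_0 : S 0 a3 = 0 := val0 ha3 0 (by simp)
  have ea3_1 : S 1 a3 = 0 := val0 ha3 1 (by simp)
  have ea3_2 : S 2 a3 = 0 := val0 ha3 2 (by simp)
  have ea3_3 : S 3 a3 = -1 := val1 ha3 3 (by simp)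
  have eb0_0 : S 0 b0 = 0 := val0 hb0 0 (by simp)
  have eb0_1 : S 1 b0 = -1 := val1 hb0 1 (by simp)
  have eb0_2 : S 2 b0 = -1 := val1 hb0 2 (by simp)
  have eb0_3 : S 3 b0 = -1 := val1 hb0 3 (by simp)
  have eb1_0 : S 0 b1 = -1 := val1 hb1 0 (by simp)
  have eb1_1 : S 1 b1 = 0 := val0 hb1 1 (by simp)
  have eb1_2 : S 2 b1 = -1 := val1 hb1 2 (by simp)
  have eb1_3 : S 3 b1 = -1 := val1 hb1 3 (by simp)
  have eb2_0 : S 0 b2 = -1 := val1 hb2 0 (by simp)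
  have eb2_1 : S 1 b2 = -1 := val1 hb2 1 (by simp)
  have eb2_2 : S 2 b2 = 0 := val0 hb2 2 (by simp)
  have eb2_3 : S 3 b2 = -1 := val1 hb2 3 (by simp)
  have eb3_0 : S 0 b3 = -1 := val1 hb3 0 (by simp)
  have eb3_1 : S 1 b3 = -1 := val1 hb3 1 (by simp)
  have eb3_2 : S 2 b3 = -1 := val1 hb3 2 (by simp)
  have eb3_3 : S 3 b3 = 0 := val0 hb3 3 (by simp)
  -- distinctness
  have na01 : a0 ≠ a1 := ne_of ha0 ha1 0 (by simp) (by simp)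
  have na02 : a0 ≠ a2 := ne_of ha0 ha2 0 (by simp) (by simp)
  have na03 : a0 ≠ a3 := ne_of ha0 ha3 0 (by simp) (by simp)
  have na12 : a1 ≠ a2 := ne_of ha1 ha2 1 (by simp) (by simp)
  have na13 : a1 ≠ a3 := ne_of ha1 ha3 1 (by simp) (by simp)
  have na23 : a2 ≠ a3 := ne_of ha2 ha3 2 (by simp) (by simp)
  have nb01 : b0 ≠ b1 := ne_of hb0 hb1 1 (by simp) (by simp)
  have nb02 : b0 ≠ b2 := ne_of hb0 hb2 2 (by simp) (by simp)
  have nb03 : b0 ≠ b3 := ne_of hb0 hb3 3 (by simp) (by simp)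
  have nb12 : b1 ≠ b2 := ne_of hb1 hb2 2 (by simp) (by simp)
  have nb13 : b1 ≠ b3 := ne_of hb1 hb3 3 (by simp) (by simp)
  have nb23 : b2 ≠ b3 := ne_of hb2 hb3 3 (by simp) (by simp)
  have na1b0 : a1 ≠ b0 := (ne_of hb0 ha1 2 (by simp) (by simp)).symm
  have na2b0 : a2 ≠ b0 := (ne_of hb0 ha2 1 (by simp) (by simp)).symm
  have na3b0 : a3 ≠ b0 := (ne_of hb0 ha3 1 (by simp) (by simp)).symm
  have na0b1 : a0 ≠ b1 := (ne_of hb1 ha0 2 (by simp) (by simp)).symm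
  have na2b1 : a2 ≠ b1 := (ne_of hb1 ha2 0 (by simp) (by simp)).symm
  have na3b1 : a3 ≠ b1 := (ne_of hb1 ha3 0 (by simp) (by simp)).symm
  have na0b2 : a0 ≠ b2 := (ne_of hb2 ha0 1 (by simp) (by simp)).symm
  have na1b2 : a1 ≠ b2 := (ne_of hb2 ha1 0 (by simp) (by simp)).symm
  have na3b2 : a3 ≠ b2 := (ne_of hb2 ha3 0 (by simp) (by simp)).symm
  have na0b3 : a0 ≠ b3 := (ne_of hb3 ha0 1 (by simp) (by simp)).symm
  have na1b3 : a1 ≠ b3 := (ne_of hb3 ha1 0 (by simp) (by simp)).symm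
  have na2b3 : a2 ≠ b3 := (ne_of hb3 ha2 0 (by simp) (by simp)).symm
  have mkinj : ∀ p q s t : Fin (2 ^ 4), p ≠ q → p ≠ s → p ≠ t → q ≠ s → q ≠ t → s ≠ t →
      Function.Injective (![p, q, s, t] : Fin 4 → Fin (2 ^ 4)) := by
    intro p q s t h1 h2 h3 h4 h5 h6 x y hxy
    fin_cases x <;> fin_cases y <;>
      simp only [Fin.zero_eta, Fin.mk_one, Matrix.cons_val_zero, Matrix.cons_val_one,
        Matrix.head_cons, Matrix.cons_val_two, Matrix.tail_cons, Matrix.cons_val_three] at hxy ⊢ <;>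
      first
        | rfl
        | exact absurd hxy h1 | exact absurd hxy.symm h1
        | exact absurd hxy h2 | exact absurd hxy.symm h2
        | exact absurd hxy h3 | exact absurd hxy.symm h3
        | exact absurd hxy h4 | exact absurd hxy.symm h4
        | exact absurd hxy h5 | exact absurd hxy.symm h5
        | exact absurd hxy h6 | exact absurd hxy.symm h6
  have key : ∀ (c : Fin 4 → Fin (2 ^ 4)), Function.Injective c →
      |((shiftMat r S).submatrix id c).det| ≤ 1 := by
    intro c hc
    exact hsub 4 (Function.Embedding.refl _) ⟨c, hc⟩
  -- the determinants
  have hB : |((shiftMat r S).submatrix id ![b0, b1, b2, b3]).det| ≤ 1 :=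
    key _ (mkinj _ _ _ _ nb01 nb02 nb03 nb12 nb13 nb23)
  have hM0 : |((shiftMat r S).submatrix id ![a1, a2, a3, b0]).det| ≤ 1 :=
    key _ (mkinj _ _ _ _ na12 na13 na1b0 na23 na2b0 na3b0)
  have hM1 : |((shiftMat r S).submatrix id ![a0, a2, a3, b1]).det| ≤ 1 :=
    key _ (mkinj _ _ _ _ na02 na03 na0b1 na23 na2b1 na3b1)
  have hM2 : |((shiftMat r S).submatrix id ![a0, a1, a3, b2]).det| ≤ 1 :=
    key _ (mkinj _ _ _ _ na01 na03 na0b2 na13 na1b2 na3b2)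
  have hM3 : |((shiftMat r S).submatrix id ![a0, a1, a2, b3]).det| ≤ 1 :=
    key _ (mkinj _ _ _ _ na01 na02 na0b3 na12 na1b3 na2b3)
  have dB : ((shiftMat r S).submatrix id ![b0, b1, b2, b3]).det = r 0 + r 1 + r 2 + r 3 - 3 := by
    rw [detFour]
    simp only [Matrix.submatrix_apply, shiftMat, Matrix.of_apply, id_eq,
      Matrix.cons_val_zero, Matrix.cons_val_one, Matrix.head_cons, Matrix.cons_val_two,
      Matrix.tail_cons, Matrix.cons_val_three,
      ea0_0, ea0_1, ea0_2, ea0_3, ea1_0, ea1_1, ea1_2, ea1_3,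
      ea2_0, ea2_1, ea2_2, ea2_3, ea3_0, ea3_1, ea3_2, ea3_3,
      eb0_0, eb0_1, eb0_2, eb0_3, eb1_0, eb1_1, eb1_2, eb1_3,
      eb2_0, eb2_1, eb2_2, eb2_3, eb3_0, eb3_1, eb3_2, eb3_3]
    ring
  have dM0 : ((shiftMat r S).submatrix id ![a1, a2, a3, b0]).det = -(2 * r 0) := by
    rw [detFour]
    simp only [Matrix.submatrix_apply, shiftMat, Matrix.of_apply, id_eq,
      Matrix.cons_val_zero, Matrix.cons_val_one, Matrix.head_cons, Matrix.cons_val_two,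
      Matrix.tail_cons, Matrix.cons_val_three,
      ea0_0, ea0_1, ea0_2, ea0_3, ea1_0, ea1_1, ea1_2, ea1_3,
      ea2_0, ea2_1, ea2_2, ea2_3, ea3_0, ea3_1, ea3_2, ea3_3,
      eb0_0, eb0_1, eb0_2, eb0_3, eb1_0, eb1_1, eb1_2, eb1_3,
      eb2_0, eb2_1, eb2_2, eb2_3, eb3_0, eb3_1, eb3_2, eb3_3]
    ring
  have dM1 : ((shiftMat r S).submatrix id ![a0, a2, a3, b1]).det = 2 * r 1 := by
    rw [detFour]
    simp only [Matrix.submatrix_apply, shiftMat, Matrix.of_apply, id_eq,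
      Matrix.cons_val_zero, Matrix.cons_val_one, Matrix.head_cons, Matrix.cons_val_two,
      Matrix.tail_cons, Matrix.cons_val_three,
      ea0_0, ea0_1, ea0_2, ea0_3, ea1_0, ea1_1, ea1_2, ea1_3,
      ea2_0, ea2_1, ea2_2, ea2_3, ea3_0, ea3_1, ea3_2, ea3_3,
      eb0_0, eb0_1, eb0_2, eb0_3, eb1_0, eb1_1, eb1_2, eb1_3,
      eb2_0, eb2_1, eb2_2, eb2_3, eb3_0, eb3_1, eb3_2, eb3_3]
    ring
  have dM2 : ((shiftMat r S).submatrix id ![a0, a1, a3, b2]).det = -(2 * r 2) := by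
    rw [detFour]
    simp only [Matrix.submatrix_apply, shiftMat, Matrix.of_apply, id_eq,
      Matrix.cons_val_zero, Matrix.cons_val_one, Matrix.head_cons, Matrix.cons_val_two,
      Matrix.tail_cons, Matrix.cons_val_three,
      ea0_0, ea0_1, ea0_2, ea0_3, ea1_0, ea1_1, ea1_2, ea1_3,
      ea2_0, ea2_1, ea2_2, ea2_3, ea3_0, ea3_1, ea3_2, ea3_3,
      eb0_0, eb0_1, eb0_2, eb0_3, eb1_0, eb1_1, eb1_2, eb1_3,
      eb2_0, eb2_1, eb2_2, eb2_3, eb3_0, eb3_1, eb3_2, eb3_3]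
    ring
  have dM3 : ((shiftMat r S).submatrix id ![a0, a1, a2, b3]).det = 2 * r 3 := by
    rw [detFour]
    simp only [Matrix.submatrix_apply, shiftMat, Matrix.of_apply, id_eq,
      Matrix.cons_val_zero, Matrix.cons_val_one, Matrix.head_cons, Matrix.cons_val_two,
      Matrix.tail_cons, Matrix.cons_val_three,
      ea0_0, ea0_1, ea0_2, ea0_3, ea1_0, ea1_1, ea1_2, ea1_3,
      ea2_0, ea2_1, ea2_2, ea2_3, ea3_0, ea3_1, ea3_2, ea3_3,
      eb0_0, eb0_1, eb0_2, eb0_3, eb1_0, eb1_1, eb1_2, eb1_3,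
      eb2_0, eb2_1, eb2_2, eb2_3, eb3_0, eb3_1, eb3_2, eb3_3]
    ring
  rw [dB] at hB; rw [dM0] at hM0; rw [dM1] at hM1; rw [dM2] at hM2; rw [dM3] at hM3
  rw [abs_le] at hB hM0 hM1 hM2 hM3
  have h0 : r 0 = 1 / 2 := by linarith [hB.1, hM0.1, hM1.2, hM2.1, hM3.2]
  have h1 : r 1 = 1 / 2 := by linarith [hB.1, hM0.1, hM1.2, hM2.1, hM3.2]
  have h2 : r 2 = 1 / 2 := by linarith [hB.1, hM0.1, hM1.2, hM2.1, hM3.2]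
  have h3 : r 3 = 1 / 2 := by linarith [hB.1, hM0.1, hM1.2, hM2.1, hM3.2]
  funext i
  fin_cases i <;> simp [h0, h1, h2, h3]
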